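/- Strong monotonicity of the barrier on the second-order cone: let y, y', d, d' lie in the interior of K_soc ⊂ ℝ^{1+m} with y ∘ d = μe and y' ∘ d' = μe for some μ > 0 (where e = (1,0)). Then −⟨d − d', y − y'⟩_J ≥ ((det d + det d')/μ) · (‖ȳ − ȳ'‖² − (y_0 − y_0')²), where ⟨a, b⟩_J = 2 aᵀb is the Jordan-algebra inner product and det w = w_0² − ‖w̄‖². -/

import Mathlib

open scoped RealInnerProductSpace

/-- The Jordan algebra `E_{1+m}` of quadratic forms: pairs `(x₀, x̄)`. -/
abbrev E (m : ℕ) : Type := ℝ × EuclideanSpace ℝ (Fin m)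

/-- The Jordan product `x ∘ y = (xᵀy, x₀ ȳ + y₀ x̄)`. -/
noncomputable def jmul {m : ℕ} (x y : E m) : E m :=
  (x.1 * y.1 + ⟪x.2, y.2⟫, x.1 • y.2 + y.1 • x.2)

/-- The standard Euclidean inner product on `ℝ^{1+m}`. -/
noncomputable def jip {m : ℕ} (x y : E m) : ℝ := x.1 * y.1 + ⟪x.2, y.2⟫

/-- The determinant `det x = x₀² - ‖x̄‖²`. -/
noncomputable def socDet {m : ℕ} (x : E m) : ℝ := x.1 ^ 2 - ‖x.2‖ ^ 2

/-- The diagonal mirroring operator `R = diag(1, -I)`. -/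
def Rop {m : ℕ} (x : E m) : E m := (x.1, -x.2)

/-- The unit element `e = (1, 0)`. -/
noncomputable def socUnit (m : ℕ) : E m := (1, 0)

/-- The second-order cone `K_soc = { x : x₀ ≥ ‖x̄‖ }`. -/
def Ksoc (m : ℕ) : Set (E m) := {x | ‖x.2‖ ≤ x.1}

lemma soc_solve {m : ℕ} (y d : E m) (μ : ℝ)
    (hy : ‖y.2‖ < y.1) (h : jmul y d = μ • socUnit m) :
    d.1 = μ * y.1 / socDet y ∧ d.2 = (-(μ / socDet y)) • y.2 := by
  have hy1 : 0 < y.1 := lt_of_le_of_lt (norm_nonneg _) hy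
  have ha : 0 < socDet y := by
    have := norm_nonneg y.2
    simp only [socDet]; nlinarith
  have h1 : y.1 * d.1 + ⟪y.2, d.2⟫ = μ := by
    have := congrArg Prod.fst h
    simpa [jmul, socUnit, mul_comm] using this
  have h2 : y.1 • d.2 + d.1 • y.2 = 0 := by
    have := congrArg Prod.snd h
    simpa [jmul, socUnit] using this
  have hd2 : d.2 = (-(d.1 / y.1)) • y.2 := by
    have : y.1 • d.2 = (-d.1) • y.2 := by
      rw [neg_smul]; linear_combination (norm := module) h2
    have := congrArg (fun v => (y.1)⁻¹ • v) this
    simpa [smul_smul, inv_mul_cancel₀ hy1.ne', div_eq_inv_mul, neg_div,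
      mul_comm] using this
  have hip : ⟪y.2, d.2⟫ = -(d.1 / y.1) * ‖y.2‖ ^ 2 := by
    rw [hd2, real_inner_smul_right, real_inner_self_eq_norm_sq]
  rw [hip] at h1
  have hd1 : d.1 = μ * y.1 / socDet y := by
    have hdet : socDet y = y.1 ^ 2 - ‖y.2‖ ^ 2 := rfl
    field_simp at h1 ⊢
    rw [hdet]; nlinarith [h1]
  refine ⟨hd1, ?_⟩
  rw [hd2, hd1]
  congr 1
  field_simp

theorem soc_barrier_strong_monotonicity {m : ℕ} (y y' d d' : E m) (μ : ℝ) (hμ : 0 < μ)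
    (hy : ‖y.2‖ < y.1) (hy' : ‖y'.2‖ < y'.1)
    (hd : ‖d.2‖ < d.1) (hd' : ‖d'.2‖ < d'.1)
    (hyd : jmul y d = μ • socUnit m) (hyd' : jmul y' d' = μ • socUnit m) :
    ((socDet d + socDet d') / μ) * (‖y.2 - y'.2‖ ^ 2 - (y.1 - y'.1) ^ 2)
      ≤ -(2 * jip (d - d') (y - y')) := by
  obtain ⟨hd1, hd2⟩ := soc_solve y d μ hy hyd
  obtain ⟨hd1', hd2'⟩ := soc_solve y' d' μ hy' hyd'
  have ha : 0 < socDet y := by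
    have := norm_nonneg y.2
    have hy1 : 0 < y.1 := lt_of_le_of_lt (norm_nonneg _) hy
    simp only [socDet]; nlinarith
  have hb : 0 < socDet y' := by
    have := norm_nonneg y'.2
    have hy1 : 0 < y'.1 := lt_of_le_of_lt (norm_nonneg _) hy'
    simp only [socDet]; nlinarith
  set a := socDet y with hA
  set b := socDet y' with hB
  set n1 := ‖y.2‖ ^ 2 with hn1
  set n2 := ‖y'.2‖ ^ 2 with hn2
  set p := ⟪y.2, y'.2⟫ with hp
  have hA' : a = y.1 ^ 2 - n1 := rfl
  have hB' : b = y'.1 ^ 2 - n2 := rfl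
  clear_value a b n1 n2 p
  have hp2 : ⟪y'.2, y.2⟫ = p := by rw [hp, real_inner_comm]
  have hnorm : ‖y.2 - y'.2‖ ^ 2 = n1 - 2 * p + n2 := by
    rw [hn1, hn2, hp, @norm_sub_sq_real]
  have hnd2 : ‖d.2‖ ^ 2 = (μ / a) ^ 2 * n1 := by
    rw [hd2, norm_smul, mul_pow, hn1, Real.norm_eq_abs, abs_neg, sq_abs]
  have hnd2' : ‖d'.2‖ ^ 2 = (μ / b) ^ 2 * n2 := by
    rw [hd2', norm_smul, mul_pow, hn2, Real.norm_eq_abs, abs_neg, sq_abs]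
  have hdetd : socDet d = μ ^ 2 / a := by
    simp only [socDet, hd1, hnd2]
    field_simp
    linear_combination (-1) * hA'
  have hdetd' : socDet d' = μ ^ 2 / b := by
    simp only [socDet, hd1', hnd2']
    field_simp
    linear_combination (-1) * hB'
  have hip : jip (d - d') (y - y') =
      (μ * y.1 / a - μ * y'.1 / b) * (y.1 - y'.1)
      + (-(μ / a) * n1 + (μ / a) * p + (μ / b) * p - (μ / b) * n2) := by
    simp only [jip, Prod.fst_sub, Prod.snd_sub, hd1, hd1', hd2, hd2',
      inner_sub_left, inner_sub_right, real_inner_smul_left,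
      real_inner_self_eq_norm_sq, ← hn1, ← hn2, ← hp, hp2]
    ring
  rw [hdetd, hdetd', hnorm, hip]
  have hn1' : n1 = y.1 ^ 2 - a := by rw [hA']; ring
  have hn2' : n2 = y'.1 ^ 2 - b := by rw [hB']; ring
  rw [hn1', hn2']
  have key : -(2 * ((μ * y.1 / a - μ * y'.1 / b) * (y.1 - y'.1) +
        (-(μ / a) * (y.1 ^ 2 - a) + μ / a * p + μ / b * p - μ / b * (y'.1 ^ 2 - b))))
      - (μ ^ 2 / a + μ ^ 2 / b) / μ * (y.1 ^ 2 - a - 2 * p + (y'.1 ^ 2 - b) - (y.1 - y'.1) ^ 2)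
      = μ * (a - b) ^ 2 / (a * b) := by
    field_simp
    ring
  have hpos : 0 ≤ μ * (a - b) ^ 2 / (a * b) := by positivity
  linarith
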